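/- Let f : ℕ → ℝ≥0 be a function such that for all r, s ∈ ℕ with f(r) > 0 one has f(r+s) ≥ f(s). Then for any real k > 0, the function g(r) := limsup_{m → ∞} f(mr)/m^k satisfies g(cr) = c^k · g(r) for all positive integers c and r. -/

import Mathlib

open Filter ENNReal

private lemma f_add_le (f : ℕ → ℝ) (hsup : ∀ r s : ℕ, 0 < f r → f s ≤ f (r + s))
    (r p q : ℕ) (hp : 0 < f (p * r)) : f (q * r) ≤ f ((p + q) * r) := by
  have h := hsup (p * r) (q * r) hp
  rwa [← add_mul] at h

private lemma f_mul_pos (f : ℕ → ℝ) (hsup : ∀ r s : ℕ, 0 < f r → f s ≤ f (r + s))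
    (r p : ℕ) (hp : 0 < f (p * r)) : ∀ j : ℕ, 0 < f ((j + 1) * p * r)
  | 0 => by simpa using hp
  | (j + 1) => by
      have e : (j + 1 + 1) * p * r = (p + (j + 1) * p) * r := by ring
      rw [e]
      exact lt_of_lt_of_le (f_mul_pos f hsup r p hp j)
        (f_add_le f hsup r p ((j + 1) * p) hp)

open Classical in
private noncomputable def witFn (f : ℕ → ℝ) (r c : ℕ) (ρ : ℕ) : ℕ :=
  if h : ∃ q, 0 < f (q * r) ∧ q % c = ρ then h.choose else 0

private lemma witFn_spec (f : ℕ → ℝ) (r c : ℕ) (ρ : ℕ)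
    (h : ∃ q, 0 < f (q * r) ∧ q % c = ρ) :
    0 < f (witFn f r c ρ * r) ∧ witFn f r c ρ % c = ρ := by
  rw [witFn, dif_pos h]
  exact h.choose_spec

private lemma exists_good_multiple (f : ℕ → ℝ)
    (hsup : ∀ r s : ℕ, 0 < f r → f s ≤ f (r + s)) (r c : ℕ) (hc : 0 < c)
    (n : ℕ) (hn : 0 < f (n * r)) :
    ∃ m, n ≤ m * c ∧ m * c ≤ n + (c - 1) * ((Finset.range c).sup (witFn f r c)) ∧
      f (n * r) ≤ f ((m * c) * r) := by
  set w := witFn f r c (n % c) with hwdef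
  have hw := witFn_spec f r c (n % c) ⟨n, hn, rfl⟩
  set x := (c - 1) * w with hxdef
  have hxB : x ≤ (c - 1) * ((Finset.range c).sup (witFn f r c)) := by
    rw [hxdef, hwdef]
    exact Nat.mul_le_mul_left _ (Finset.le_sup (Finset.mem_range.mpr (Nat.mod_lt n hc)))
  have hdvd : c ∣ n + x := by
    have h1 : w ≡ n [MOD c] := hw.2
    have h2 : n + x ≡ n + (c - 1) * n [MOD c] :=
      Nat.ModEq.add_left n (Nat.ModEq.mul_left (c - 1) h1)
    have h3 : n + (c - 1) * n = c * n := by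
      have hc1 : c - 1 + 1 = c := Nat.succ_pred_eq_of_pos hc
      calc n + (c - 1) * n = (c - 1 + 1) * n := by ring
        _ = c * n := by rw [hc1]
    have h4 : n + x ≡ 0 [MOD c] := by
      rw [h3] at h2
      exact h2.trans ((Nat.modEq_zero_iff_dvd).mpr (dvd_mul_right c n))
    exact (Nat.modEq_zero_iff_dvd).mp h4
  obtain ⟨m, hm⟩ := hdvd
  have hmc : m * c = n + x := by rw [mul_comm]; exact hm.symm
  refine ⟨m, hmc ▸ Nat.le_add_right n x, hmc ▸ Nat.add_le_add_left hxB n, ?_⟩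
  rw [hmc]
  rcases Nat.lt_or_ge c 2 with h2 | h2
  · have hceq : c = 1 := by omega
    have hx0 : x = 0 := by simp [hxdef, hceq]
    simp [hx0]
  · have hx' : x = (c - 2 + 1) * w := by rw [hxdef]; congr 1; omega
    have hxpos : 0 < f (x * r) := by
      rw [hx']
      exact f_mul_pos f hsup r w hw.1 (c - 2)
    have h := f_add_le f hsup r x n hxpos
    rwa [add_comm x n] at h

open Classical in
private noncomputable def hFn (f : ℕ → ℝ) (r c : ℕ) (n : ℕ) : ℕ :=
  if h : ∃ m, n ≤ m * c ∧ m * c ≤ n + (c - 1) * ((Finset.range c).sup (witFn f r c)) ∧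
      f (n * r) ≤ f ((m * c) * r) then h.choose else n

private lemma hFn_spec (f : ℕ → ℝ)
    (hsup : ∀ r s : ℕ, 0 < f r → f s ≤ f (r + s)) (r c : ℕ) (hc : 0 < c)
    (n : ℕ) (hn : 0 < f (n * r)) :
    n ≤ hFn f r c n * c ∧
      hFn f r c n * c ≤ n + (c - 1) * ((Finset.range c).sup (witFn f r c)) ∧
      f (n * r) ≤ f ((hFn f r c n * c) * r) := by
  have h := exists_good_multiple f hsup r c hc n hn
  rw [hFn, dif_pos h]
  exact h.choose_spec

private lemma hFn_lower (f : ℕ → ℝ) (r c : ℕ) (hc : 0 < c) (n : ℕ) :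
    n ≤ hFn f r c n * c := by
  rw [hFn]
  split
  · next h => exact h.choose_spec.1
  · exact Nat.le_mul_of_pos_right n hc

private lemma limsup_comp_le_ennreal (u : ℕ → ℝ≥0∞) (h : ℕ → ℕ)
    (hh : Filter.Tendsto h Filter.atTop Filter.atTop) :
    Filter.limsup (fun n => u (h n)) Filter.atTop ≤ Filter.limsup u Filter.atTop := by
  calc Filter.limsup (fun n => u (h n)) Filter.atTop
      = Filter.limsup u (Filter.map h Filter.atTop) := Filter.limsup_comp u h Filter.atTop
    _ ≤ Filter.limsup u Filter.atTop := Filter.limsup_le_limsup_of_le hh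

theorem limsup_rate_homogeneous (f : ℕ → ℝ) (hf : ∀ n, 0 ≤ f n)
    (hsup : ∀ r s : ℕ, 0 < f r → f s ≤ f (r + s))
    (k : ℝ) (hk : 0 < k)
    (g : ℕ → ℝ≥0∞)
    (hg : ∀ r : ℕ, g r =
      Filter.limsup (fun m : ℕ => ENNReal.ofReal (f (m * r) / (m : ℝ) ^ k)) Filter.atTop) :
    ∀ c r : ℕ, 0 < c → 0 < r → g (c * r) = ENNReal.ofReal ((c : ℝ) ^ k) * g r := by
  intro c r hc hr
  classical
  set a : ℕ → ℝ≥0∞ := fun n => ENNReal.ofReal (f (n * r) / (n : ℝ) ^ k) with ha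
  have hcR : (0 : ℝ) < (c : ℝ) := by exact_mod_cast hc
  have hck : (0 : ℝ) < (c : ℝ) ^ k := Real.rpow_pos_of_pos hcR k
  -- Step A: algebraic identity for the c*r sequence
  have hA : ∀ m : ℕ, ENNReal.ofReal (f (m * (c * r)) / (m : ℝ) ^ k)
      = ENNReal.ofReal ((c : ℝ) ^ k) * a (m * c) := by
    intro m
    have h1 : m * (c * r) = (m * c) * r := by ring
    rw [h1, ha, ← ENNReal.ofReal_mul hck.le]
    congr 1
    push_cast
    rcases Nat.eq_zero_or_pos m with hm | hm
    · subst hm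
      norm_num [Real.zero_rpow hk.ne']
    · have hmR : (0 : ℝ) < (m : ℝ) := by exact_mod_cast hm
      have hmk : ((m : ℝ) ^ k) ≠ 0 := (Real.rpow_pos_of_pos hmR k).ne'
      rw [Real.mul_rpow hmR.le hcR.le]
      field_simp [hmk, hck.ne']
  -- Step B: subsequence limsup ≤ full limsup
  have htc : Filter.Tendsto (fun m : ℕ => m * c) Filter.atTop Filter.atTop := by
    apply Filter.tendsto_atTop_atTop.mpr
    intro b
    exact ⟨b, fun n hn => le_trans hn (Nat.le_mul_of_pos_right n hc)⟩
  have hB : Filter.limsup (fun m => a (m * c)) Filter.atTop ≤ Filter.limsup a Filter.atTop :=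
    limsup_comp_le_ennreal a (fun m => m * c) htc
  -- the correcting constant
  set C : ℕ := (c - 1) * ((Finset.range c).sup (witFn f r c)) with hC
  have hh : Filter.Tendsto (fun n => hFn f r c n) Filter.atTop Filter.atTop := by
    apply Filter.tendsto_atTop.mpr
    intro b
    filter_upwards [Filter.eventually_ge_atTop (b * c)] with n hn
    have h1 : b * c ≤ hFn f r c n * c := le_trans hn (hFn_lower f r c hc n)
    exact Nat.le_of_mul_le_mul_right h1 hc
  set φ : ℕ → ℝ≥0∞ := fun n => ENNReal.ofReal ((((n : ℝ) + C) / n) ^ k) with hφdef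
  -- pointwise eventual bound
  have hptwise : ∀ᶠ n in Filter.atTop, a n ≤ φ n * a (hFn f r c n * c) := by
    filter_upwards [Filter.eventually_ge_atTop 1] with n hn1
    by_cases hfn : 0 < f (n * r)
    · obtain ⟨hlb, hub, hfle⟩ := hFn_spec f hsup r c hc n hfn
      have hn0 : (0 : ℝ) < (n : ℝ) := by exact_mod_cast hn1
      set N := hFn f r c n * c with hN
      have hN0 : (0 : ℝ) < (N : ℝ) := lt_of_lt_of_le hn0 (by exact_mod_cast hlb)
      have hNle : (N : ℝ) ≤ (n : ℝ) + (C : ℝ) := by exact_mod_cast hub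
      have key : f (n * r) / (n : ℝ) ^ k
          ≤ (((n : ℝ) + C) / n) ^ k * (f (N * r) / (N : ℝ) ^ k) := by
        have hnk : (0 : ℝ) < (n : ℝ) ^ k := Real.rpow_pos_of_pos hn0 k
        have hNk : (0 : ℝ) < (N : ℝ) ^ k := Real.rpow_pos_of_pos hN0 k
        have h1 : f (n * r) / (n : ℝ) ^ k ≤ f (N * r) / (n : ℝ) ^ k := by gcongr
        have h2 : f (N * r) / (n : ℝ) ^ k = ((N : ℝ) / n) ^ k * (f (N * r) / (N : ℝ) ^ k) := by
          rw [Real.div_rpow hN0.le hn0.le]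
          field_simp
        have h3 : ((N : ℝ) / n) ^ k ≤ (((n : ℝ) + C) / n) ^ k := by
          apply Real.rpow_le_rpow (by positivity) _ hk.le
          gcongr
        calc f (n * r) / (n : ℝ) ^ k ≤ f (N * r) / (n : ℝ) ^ k := h1
          _ = ((N : ℝ) / n) ^ k * (f (N * r) / (N : ℝ) ^ k) := h2
          _ ≤ (((n : ℝ) + C) / n) ^ k * (f (N * r) / (N : ℝ) ^ k) := by
              exact mul_le_mul_of_nonneg_right h3 (div_nonneg (hf _) hNk.le)
      calc a n = ENNReal.ofReal (f (n * r) / (n : ℝ) ^ k) := by simp only [ha]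
        _ ≤ ENNReal.ofReal ((((n : ℝ) + C) / n) ^ k * (f (N * r) / (N : ℝ) ^ k)) :=
            ENNReal.ofReal_le_ofReal key
        _ = φ n * a N := by
            rw [ENNReal.ofReal_mul (by positivity)]
    · have hz : f (n * r) = 0 := le_antisymm (not_lt.mp hfn) (hf _)
      have : a n = 0 := by simp [ha, hz]
      simp [this]
  -- φ tends to 1
  have hreal : Filter.Tendsto (fun n : ℕ => ((n : ℝ) + C) / n) Filter.atTop (nhds 1) := by
    have h0 : Filter.Tendsto (fun n : ℕ => 1 + (C : ℝ) / n) Filter.atTop (nhds (1 + 0)) :=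
      tendsto_const_nhds.add (tendsto_const_div_atTop_nhds_zero_nat (C : ℝ))
    rw [add_zero] at h0
    apply h0.congr'
    filter_upwards [Filter.eventually_ge_atTop 1] with n hn
    have hn0 : ((n : ℝ)) ≠ 0 := by
      have : (0 : ℝ) < (n : ℝ) := by exact_mod_cast hn
      exact this.ne'
    rw [add_div, div_self hn0]
  have hrpow : Filter.Tendsto (fun n : ℕ => (((n : ℝ) + C) / n) ^ k) Filter.atTop (nhds 1) := by
    have hcont : ContinuousAt (fun x : ℝ => x ^ k) 1 :=
      Real.continuousAt_rpow_const 1 k (Or.inl one_ne_zero)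
    have := hcont.tendsto.comp hreal
    simpa [Real.one_rpow, Function.comp_def] using this
  have hφ : Filter.Tendsto φ Filter.atTop (nhds 1) := by
    have := (ENNReal.continuous_ofReal.tendsto 1).comp hrpow
    simpa [hφdef, Function.comp_def] using this
  -- hard direction
  set L := Filter.limsup (fun m => a (m * c)) Filter.atTop with hL
  have hψ : Filter.limsup (fun n => a (hFn f r c n * c)) Filter.atTop ≤ L := by
    rw [hL]
    exact limsup_comp_le_ennreal (fun m => a (m * c)) (fun n => hFn f r c n) hh
  have hε : ∀ ε : ℝ≥0∞, 0 < ε → ε ≠ ⊤ →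
      Filter.limsup a Filter.atTop ≤ (1 + ε) * L := by
    intro ε hε0 hεtop
    have hlt : (1 : ℝ≥0∞) < 1 + ε := ENNReal.lt_add_right one_ne_top hε0.ne'
    have h1 : ∀ᶠ n in Filter.atTop, φ n ≤ 1 + ε :=
      (hφ.eventually_lt_const hlt).mono fun n hn => hn.le
    have h2 : ∀ᶠ n in Filter.atTop, a n ≤ (1 + ε) * a (hFn f r c n * c) := by
      filter_upwards [hptwise, h1] with n hn1 hn2
      exact le_trans hn1 (mul_le_mul_left hn2 _)
    calc Filter.limsup a Filter.atTop
        ≤ Filter.limsup (fun n => (1 + ε) * a (hFn f r c n * c)) Filter.atTop :=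
          Filter.limsup_le_limsup h2
      _ = (1 + ε) * Filter.limsup (fun n => a (hFn f r c n * c)) Filter.atTop :=
          ENNReal.limsup_const_mul_of_ne_top (ENNReal.add_ne_top.mpr ⟨one_ne_top, hεtop⟩)
      _ ≤ (1 + ε) * L := mul_le_mul_right hψ _
  have hC2 : Filter.limsup a Filter.atTop ≤ L := by
    by_cases hLtop : L = ⊤
    · rw [hLtop]; exact le_top
    · apply ENNReal.le_of_forall_pos_le_add
      intro δ hδ _
      have hδ' : (δ : ℝ≥0∞) ≠ 0 := by exact_mod_cast hδ.ne'
      by_cases hL0 : L = 0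
      · have h1 := hε 1 one_pos one_ne_top
        rw [hL0, mul_zero] at h1
        exact le_trans h1 (by simp)
      · have hddiv : (0 : ℝ≥0∞) < δ / L := ENNReal.div_pos hδ' hLtop
        have hdtop : (δ : ℝ≥0∞) / L ≠ ⊤ := (ENNReal.div_lt_top coe_ne_top hL0).ne
        have h1 := hε (δ / L) hddiv hdtop
        calc Filter.limsup a Filter.atTop ≤ (1 + δ / L) * L := h1
          _ = L + (δ / L) * L := by rw [add_mul, one_mul]
          _ = L + δ := by rw [ENNReal.div_mul_cancel hL0 hLtop]
  have hLa : L = Filter.limsup a Filter.atTop := le_antisymm hB hC2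
  -- conclude
  rw [hg (c * r), hg r]
  calc Filter.limsup (fun m : ℕ => ENNReal.ofReal (f (m * (c * r)) / (m : ℝ) ^ k)) Filter.atTop
      = Filter.limsup (fun m : ℕ => ENNReal.ofReal ((c : ℝ) ^ k) * a (m * c)) Filter.atTop := by
        apply Filter.limsup_congr
        filter_upwards with m
        rw [hA m]
    _ = ENNReal.ofReal ((c : ℝ) ^ k) * L := by
        rw [hL]
        exact ENNReal.limsup_const_mul_of_ne_top ofReal_ne_top
    _ = ENNReal.ofReal ((c : ℝ) ^ k) *
        Filter.limsup (fun m : ℕ => ENNReal.ofReal (f (m * r) / (m : ℝ) ^ k)) Filter.atTop := by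
        rw [hLa, ha]
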